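/- For a crossed simplicial group ΔG, the free functor i_! : sSet → ΔG-Set given by i_!(X)_n = Aut_{ΔG}([n]) × X_n, with faces d_i(g,x) = (d_i g, d_{g^{-1}(i)} x) and degeneracies s_i(g,x) = (s_i g, s_{g^{-1}(i)} x), is left adjoint to the forgetful functor i* : ΔG-Set → sSet that forgets the ΔG-action. -/

import Mathlib

open CategoryTheory Opposite

/-- A crossed simplicial group structure: a category `G` with an embedding of the simplex
category which is bijective on objects, such that every morphism `i[m] ⟶ i[n]` factors
uniquely as `i(φ) ∘ g` with `φ : [m] ⟶ [n]` in `Δ` and `g` an automorphism of `i[m]`. -/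
structure CrossedSimplicialGroup (G : Type) [SmallCategory G] where
  i : SimplexCategory ⥤ G
  faithful : i.Faithful
  bij_obj : Function.Bijective i.obj
  factor : ∀ {m n : SimplexCategory} (u : i.obj m ⟶ i.obj n),
    ∃! p : (m ⟶ n) × (i.obj m ≅ i.obj m), u = p.2.hom ≫ i.map p.1

/-- The crossed action: the unique factorisation of `i(φ) ≫ g` as an automorphism of `i[m]`
followed by a morphism of `Δ` (this encodes the formulas `d_i(g)` and `g⁻¹(i)`). -/
noncomputable def gAct {G : Type} [SmallCategory G] (S : CrossedSimplicialGroup G)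
    {m n : SimplexCategory} (φ : m ⟶ n) (g : Aut (S.i.obj n)) :
    (m ⟶ n) × (S.i.obj m ≅ S.i.obj m) :=
  (S.factor (S.i.map φ ≫ g.hom)).exists.choose

section Aux

variable {G : Type} [SmallCategory G] (S : CrossedSimplicialGroup G)

lemma aut_one_hom (c : G) : (1 : Aut c).hom = 𝟙 c := rfl

lemma gAct_spec {m n : SimplexCategory} (φ : m ⟶ n) (g : Aut (S.i.obj n)) :
    S.i.map φ ≫ g.hom = (gAct S φ g).2.hom ≫ S.i.map (gAct S φ g).1 :=
  (S.factor (S.i.map φ ≫ g.hom)).exists.choose_spec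

lemma gAct_one {m n : SimplexCategory} (φ : m ⟶ n) :
    gAct S φ 1 = (φ, Iso.refl _) :=
  (S.factor (S.i.map φ ≫ (1 : Aut (S.i.obj n)).hom)).unique
    (gAct_spec S φ 1) (by rw [aut_one_hom]; simp)

/-- The object equivalence coming from bijectivity on objects. -/
noncomputable def obE : SimplexCategory ≃ G := Equiv.ofBijective S.i.obj S.bij_obj

variable (L : SSet ⥤ (Gᵒᵖ ⥤ Type))
  (e : ∀ (X : SSet) (n : SimplexCategory),
    (L.obj X).obj (op (S.i.obj n)) ≃ Aut (S.i.obj n) × X.obj (op n))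

/-- The candidate component of the counit-style map at objects in the image of `i`. -/
def Fcomp {X : SSet} {Y : Gᵒᵖ ⥤ Type} (β : X ⟶ S.i.op ⋙ Y) (n : SimplexCategory) :
    (L.obj X).obj (op (S.i.obj n)) → Y.obj (op (S.i.obj n)) :=
  fun z => Y.map ((e X n z).1.hom.op) (β.app (op n) ((e X n z).2))

variable
  (hmap : ∀ (X : SSet) {m n : SimplexCategory} (φ : m ⟶ n)
    (z : (L.obj X).obj (op (S.i.obj n))),
    e X m ((L.obj X).map (S.i.map φ).op z) =
      ((gAct S φ (e X n z).1).2, X.map ((gAct S φ (e X n z).1).1).op (e X n z).2))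
  (hAut : ∀ (X : SSet) (n : SimplexCategory) (θ : Aut (S.i.obj n))
    (z : (L.obj X).obj (op (S.i.obj n))),
    e X n ((L.obj X).map θ.hom.op z) = (θ ≪≫ (e X n z).1, (e X n z).2))

include hmap hAut in
lemma Fcomp_nat {X : SSet} {Y : Gᵒᵖ ⥤ Type} (β : X ⟶ S.i.op ⋙ Y)
    {m n : SimplexCategory} (v : S.i.obj m ⟶ S.i.obj n)
    (z : (L.obj X).obj (op (S.i.obj n))) :
    Fcomp S L e β m ((L.obj X).map v.op z) = Y.map v.op (Fcomp S L e β n z) := by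
  obtain ⟨⟨φ, θ⟩, hfac, -⟩ := S.factor v
  have hv : (L.obj X).map v.op z
      = (L.obj X).map (θ.hom.op) ((L.obj X).map (S.i.map φ).op z) := by
    rw [← FunctorToTypes.map_comp_apply, hfac, op_comp]
  set g := (e X n z).1 with hg
  set x := (e X n z).2 with hx
  have h1 := hmap X φ z
  have h2 := hAut X m θ ((L.obj X).map (S.i.map φ).op z)
  rw [h1] at h2
  -- naturality of β at (gAct S φ g).1
  have hβ : β.app (op m) (X.map ((gAct S φ g).1).op x)
      = Y.map (S.i.map (gAct S φ g).1).op (β.app (op n) x) :=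
    ConcreteCategory.congr_hom (β.naturality ((gAct S φ g).1).op) x
  unfold Fcomp
  rw [hv, h2]
  dsimp only
  rw [hβ, ← FunctorToTypes.map_comp_apply, ← FunctorToTypes.map_comp_apply,
    ← op_comp, ← op_comp]
  have key : (θ ≪≫ (gAct S φ g).2).hom ≫ S.i.map (gAct S φ g).1 = v ≫ g.hom := by
    calc (θ ≪≫ (gAct S φ g).2).hom ≫ S.i.map (gAct S φ g).1
        = θ.hom ≫ ((gAct S φ g).2.hom ≫ S.i.map (gAct S φ g).1) := by
          simp [Iso.trans_hom]
      _ = θ.hom ≫ (S.i.map φ ≫ g.hom) := by rw [← gAct_spec]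
      _ = v ≫ g.hom := by rw [hfac]; simp
  rw [key]

variable (hnat : ∀ {X X' : SSet} (φ : X ⟶ X') (n : SimplexCategory)
    (z : (L.obj X).obj (op (S.i.obj n))),
    e X' n ((L.map φ).app (op (S.i.obj n)) z) = ((e X n z).1, φ.app (op n) (e X n z).2))

/-- The forward direction of the hom-equivalence. -/
def fwd {X : SSet} {Y : Gᵒᵖ ⥤ Type} (α : L.obj X ⟶ Y)
    (hmap : ∀ (X : SSet) {m n : SimplexCategory} (φ : m ⟶ n)
      (z : (L.obj X).obj (op (S.i.obj n))),
      e X m ((L.obj X).map (S.i.map φ).op z) =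
        ((gAct S φ (e X n z).1).2, X.map ((gAct S φ (e X n z).1).1).op (e X n z).2)) :
    X ⟶ S.i.op ⋙ Y where
  app m := TypeCat.ofHom fun x => α.app (op (S.i.obj m.unop)) ((e X m.unop).symm (1, x))
  naturality m m' f := by
    refine ConcreteCategory.hom_ext _ _ (fun x => ?_)
    simp only [types_comp_apply, TypeCat.ofHom_apply]
    dsimp only [Functor.comp_obj, Functor.comp_map, Functor.op_obj, Functor.op_map]
    have hz : (L.obj X).map (S.i.map f.unop).op ((e X m.unop).symm (1, x))
        = (e X m'.unop).symm (1, X.map f x) := by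
      apply (e X m'.unop).injective
      rw [hmap X f.unop, Equiv.apply_symm_apply, Equiv.apply_symm_apply, gAct_one]
      exact Prod.ext rfl rfl
    have := ConcreteCategory.congr_hom (α.naturality ((S.i.map f.unop).op)) ((e X m.unop).symm (1, x))
    dsimp at this
    rw [← this, hz]

/-- The backward direction of the hom-equivalence. -/
noncomputable def bwd {X : SSet} {Y : Gᵒᵖ ⥤ Type} (β : X ⟶ S.i.op ⋙ Y)
    (hmap : ∀ (X : SSet) {m n : SimplexCategory} (φ : m ⟶ n)
      (z : (L.obj X).obj (op (S.i.obj n))),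
      e X m ((L.obj X).map (S.i.map φ).op z) =
        ((gAct S φ (e X n z).1).2, X.map ((gAct S φ (e X n z).1).1).op (e X n z).2))
    (hAut : ∀ (X : SSet) (n : SimplexCategory) (θ : Aut (S.i.obj n))
      (z : (L.obj X).obj (op (S.i.obj n))),
      e X n ((L.obj X).map θ.hom.op z) = (θ ≪≫ (e X n z).1, (e X n z).2)) :
    L.obj X ⟶ Y where
  app c := TypeCat.ofHom fun z =>
    Y.map (eqToHom (X := c.unop) (Y := S.i.obj ((obE S).symm c.unop)) ((obE S).apply_symm_apply c.unop : S.i.obj ((obE S).symm c.unop) = c.unop).symm).op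
      (Fcomp S L e β ((obE S).symm c.unop)
        ((L.obj X).map (eqToHom (X := S.i.obj ((obE S).symm c.unop)) (Y := c.unop) ((obE S).apply_symm_apply c.unop : S.i.obj ((obE S).symm c.unop) = c.unop)).op z))
  naturality c c' f := by
    refine ConcreteCategory.hom_ext _ _ (fun z => ?_)
    set n := (obE S).symm c.unop with hn
    set n' := (obE S).symm c'.unop with hn'
    have h : S.i.obj n = c.unop := (obE S).apply_symm_apply c.unop
    have h' : S.i.obj n' = c'.unop := (obE S).apply_symm_apply c'.unop
    set v : S.i.obj n' ⟶ S.i.obj n := eqToHom h' ≫ f.unop ≫ eqToHom h.symm with hv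
    have hvop : (eqToHom h).op ≫ v.op = f ≫ (eqToHom h').op := by
      rw [← op_comp]
      simp [hv]
    simp only [types_comp_apply, TypeCat.ofHom_apply]
    rw [← FunctorToTypes.map_comp_apply, ← hvop, FunctorToTypes.map_comp_apply,
      Fcomp_nat S L e hmap hAut β v, ← FunctorToTypes.map_comp_apply,
      ← FunctorToTypes.map_comp_apply]
    have hmor : v.op ≫ (eqToHom h'.symm).op = (eqToHom h.symm).op ≫ f := by
      apply Quiver.Hom.unop_inj
      simp [hv]
    rw [hmor]

include hmap hAut in
lemma bwd_app_i {X : SSet} {Y : Gᵒᵖ ⥤ Type} (β : X ⟶ S.i.op ⋙ Y)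
    (n : SimplexCategory) (z : (L.obj X).obj (op (S.i.obj n))) :
    (bwd S L e β hmap hAut).app (op (S.i.obj n)) z = Fcomp S L e β n z := by
  have h : S.i.obj ((obE S).symm (S.i.obj n)) = S.i.obj n :=
    (obE S).apply_symm_apply (S.i.obj n)
  change Y.map (eqToHom h.symm).op
      (Fcomp S L e β _ ((L.obj X).map (eqToHom h).op z)) = _
  rw [Fcomp_nat S L e hmap hAut β (eqToHom h) z, ← FunctorToTypes.map_comp_apply,
    ← op_comp]
  simp

include hmap hAut in
lemma fwd_bwd {X : SSet} {Y : Gᵒᵖ ⥤ Type} (β : X ⟶ S.i.op ⋙ Y) :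
    fwd S L e (bwd S L e β hmap hAut) hmap = β := by
  apply NatTrans.ext
  funext m
  ext x
  show (bwd S L e β hmap hAut).app (op (S.i.obj m.unop)) ((e X m.unop).symm (1, x))
      = β.app m x
  rw [bwd_app_i S L e hmap hAut]
  unfold Fcomp
  rw [Equiv.apply_symm_apply]
  dsimp only
  rw [aut_one_hom]
  simp

include hAut in
lemma Fcomp_fwd {X : SSet} {Y : Gᵒᵖ ⥤ Type} (α : L.obj X ⟶ Y) (n : SimplexCategory)
    (z : (L.obj X).obj (op (S.i.obj n))) :
    Fcomp S L e (fwd S L e α hmap) n z = α.app (op (S.i.obj n)) z := by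
  unfold Fcomp fwd
  dsimp only
  have hz : (L.obj X).map ((e X n z).1.hom.op) ((e X n).symm (1, (e X n z).2)) = z := by
    apply (e X n).injective
    rw [hAut X n, Equiv.apply_symm_apply]
    rw [show ((1 : Aut (S.i.obj n)) : S.i.obj n ≅ S.i.obj n) = Iso.refl _ from rfl,
      ]
    exact Prod.ext (Iso.trans_refl _) rfl
  have hn := ConcreteCategory.congr_hom (α.naturality ((e X n z).1.hom.op)) ((e X n).symm (1, (e X n z).2))
  dsimp at hn
  exact hn.symm.trans (congrArg (α.app (op (S.i.obj n))) hz)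

include hmap hAut in
lemma bwd_fwd {X : SSet} {Y : Gᵒᵖ ⥤ Type} (α : L.obj X ⟶ Y) :
    bwd S L e (fwd S L e α hmap) hmap hAut = α := by
  apply NatTrans.ext
  funext c
  ext z
  have h : S.i.obj ((obE S).symm c.unop) = c.unop := (obE S).apply_symm_apply c.unop
  change Y.map (eqToHom h.symm).op
      (Fcomp S L e (fwd S L e α hmap) _ ((L.obj X).map (eqToHom h).op z)) = α.app c z
  rw [Fcomp_fwd S L e hmap hAut]
  have hn := ConcreteCategory.congr_hom (α.naturality ((eqToHom h).op : c ⟶ op (S.i.obj _))) z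
  dsimp at hn
  rw [hn, ← FunctorToTypes.map_comp_apply, ← op_comp]
  simp

include hnat in
lemma fwd_nat_left {X' X : SSet} {Y : Gᵒᵖ ⥤ Type} (f : X' ⟶ X) (α : L.obj X ⟶ Y) :
    fwd S L e (L.map f ≫ α) hmap = f ≫ fwd S L e α hmap := by
  apply NatTrans.ext
  funext m
  ext x
  show α.app (op (S.i.obj m.unop)) ((L.map f).app (op (S.i.obj m.unop)) ((e X' m.unop).symm (1, x)))
      = α.app (op (S.i.obj m.unop)) ((e X m.unop).symm (1, f.app m x))
  refine congrArg (α.app (op (S.i.obj m.unop))) ?_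
  apply (e X m.unop).injective
  rw [hnat f, Equiv.apply_symm_apply, Equiv.apply_symm_apply]

end Aux

/-- For a crossed simplicial group `ΔG`, the free functor `i_! : sSet ⥤ ΔG-Set` with
`i_!(X)_n = Aut_{ΔG}([n]) × X_n`, automorphisms acting by left multiplication and the
simplicial operators acting through the crossed-group factorisation (the formulas
`d_i(g, x) = (d_i g, d_{g⁻¹(i)} x)` and `s_i(g, x) = (s_i g, s_{g⁻¹(i)} x)`), is left
adjoint to the forgetful functor `i^* : ΔG-Set ⥤ sSet`. -/
theorem stmt_14 {G : Type} [SmallCategory G] (S : CrossedSimplicialGroup G)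
    (L : SSet ⥤ (Gᵒᵖ ⥤ Type))
    (e : ∀ (X : SSet) (n : SimplexCategory),
      (L.obj X).obj (op (S.i.obj n)) ≃ Aut (S.i.obj n) × X.obj (op n))
    (hnat : ∀ {X X' : SSet} (φ : X ⟶ X') (n : SimplexCategory)
      (z : (L.obj X).obj (op (S.i.obj n))),
      e X' n ((L.map φ).app (op (S.i.obj n)) z) = ((e X n z).1, φ.app (op n) (e X n z).2))
    (hmap : ∀ (X : SSet) {m n : SimplexCategory} (φ : m ⟶ n)
      (z : (L.obj X).obj (op (S.i.obj n))),
      e X m ((L.obj X).map (S.i.map φ).op z) =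
        ((gAct S φ (e X n z).1).2, X.map ((gAct S φ (e X n z).1).1).op (e X n z).2))
    (hAut : ∀ (X : SSet) (n : SimplexCategory) (θ : Aut (S.i.obj n))
      (z : (L.obj X).obj (op (S.i.obj n))),
      e X n ((L.obj X).map θ.hom.op z) = (θ ≪≫ (e X n z).1, (e X n z).2)) :
    Nonempty (L ⊣ (Functor.whiskeringLeft SimplexCategoryᵒᵖ Gᵒᵖ Type).obj S.i.op) := by
  refine ⟨Adjunction.mkOfHomEquiv
    { homEquiv := fun X Y =>
        { toFun := fun α => fwd S L e α hmap
          invFun := fun β => bwd S L e β hmap hAut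
          left_inv := fun α => bwd_fwd S L e hmap hAut α
          right_inv := fun β => fwd_bwd S L e hmap hAut β }
      homEquiv_naturality_left_symm := ?_
      homEquiv_naturality_right := ?_ }⟩
  · intro X' X Y f g
    dsimp only [Equiv.coe_fn_symm_mk]
    have hinj : Function.Injective (fun α : L.obj X' ⟶ Y => fwd S L e α hmap) := by
      intro a b hab
      rw [← bwd_fwd S L e hmap hAut a, ← bwd_fwd S L e hmap hAut b]
      exact congrArg (fun β => bwd S L e β hmap hAut) hab
    apply hinj
    dsimp only
    rw [fwd_bwd S L e hmap hAut, fwd_nat_left S L e hmap hnat, fwd_bwd S L e hmap hAut]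
  · intro X Y Y' f g
    apply NatTrans.ext
    rfl
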